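/- For positive definite n×n matrices A and B and α ∈ [0,1], the Hadamard product satisfies A ∘ B ≥ (A #_α B) ∘ (A #_{1-α} B) in the Loewner order, where A #_α B = A^{1/2}(A^{-1/2} B A^{-1/2})^α A^{1/2} is the weighted geometric mean. -/

import Mathlib

open Matrix ComplexOrder

/-- `f(A)` via the spectral theorem: apply `f : ℝ → ℝ` to the eigenvalues of a
Hermitian matrix (and act as the identity on non-Hermitian input). -/
noncomputable def matFun {m : Type*} [Fintype m] [DecidableEq m]
    (f : ℝ → ℝ) (A : Matrix m m ℂ) : Matrix m m ℂ :=
  if hA : A.IsHermitian then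
    (hA.eigenvectorUnitary : Matrix m m ℂ) *
      Matrix.diagonal (fun i => ((f (hA.eigenvalues i) : ℝ) : ℂ)) *
      star (hA.eigenvectorUnitary : Matrix m m ℂ)
  else A

/-- Real power `A ^ r` of a (Hermitian) matrix, via the spectral theorem. -/
noncomputable def mpow {m : Type*} [Fintype m] [DecidableEq m]
    (A : Matrix m m ℂ) (r : ℝ) : Matrix m m ℂ :=
  matFun (fun x => x ^ r) A

/-- The power mean interpolational path `A m_{r,t} B`; for `r = 0` it is the
weighted geometric mean `A^{1/2} (A^{-1/2} B A^{-1/2})^t A^{1/2}`. -/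
noncomputable def powerMean {m : Type*} [Fintype m] [DecidableEq m]
    (r t : ℝ) (A B : Matrix m m ℂ) : Matrix m m ℂ :=
  mpow A (1 / 2) *
    (if r = 0 then mpow (mpow A (-(1 / 2)) * B * mpow A (-(1 / 2))) t
      else mpow ((1 - t) • (1 : Matrix m m ℂ) +
        t • mpow (mpow A (-(1 / 2)) * B * mpow A (-(1 / 2))) r) (1 / r)) *
    mpow A (1 / 2)

/-- The weighted geometric mean `A #_t B`. -/
noncomputable def geoMean {m : Type*} [Fintype m] [DecidableEq m]
    (t : ℝ) (A B : Matrix m m ℂ) : Matrix m m ℂ :=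
  powerMean 0 t A B

open scoped Kronecker

section Aux

variable {m : Type*} [Fintype m] [DecidableEq m]
variable {m' : Type*} [Fintype m'] [DecidableEq m']

/-- Conjugation of a real diagonal matrix by a unitary. -/
noncomputable def conjD (U : Matrix.unitaryGroup m ℂ) (d : m → ℝ) : Matrix m m ℂ :=
  (U : Matrix m m ℂ) * Matrix.diagonal (fun i => ((d i : ℝ) : ℂ)) * star (U : Matrix m m ℂ)

lemma conjD_isHermitian (U : Matrix.unitaryGroup m ℂ) (d : m → ℝ) :
    (conjD U d).IsHermitian := by
  rw [conjD, Matrix.star_eq_conjTranspose]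
  refine Matrix.isHermitian_mul_mul_conjTranspose _ ?_
  exact Matrix.isHermitian_diagonal_of_self_adjoint _
    (funext fun i => by simp [_root_.IsSelfAdjoint, Complex.conj_ofReal])

lemma conjD_mul (U : Matrix.unitaryGroup m ℂ) (d e : m → ℝ) :
    conjD U d * conjD U e = conjD U (fun i => d i * e i) := by
  have h1 : star (U : Matrix m m ℂ) * (U : Matrix m m ℂ) = 1 :=
    Matrix.UnitaryGroup.star_mul_self U
  simp only [conjD, Matrix.mul_assoc]
  rw [← Matrix.mul_assoc (star (U : Matrix m m ℂ)) (U : Matrix m m ℂ), h1, Matrix.one_mul,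
    ← Matrix.mul_assoc (Matrix.diagonal _) (Matrix.diagonal _), Matrix.diagonal_mul_diagonal]
  push_cast
  rfl

lemma conjD_one (U : Matrix.unitaryGroup m ℂ) : conjD U (fun _ => 1) = 1 := by
  have h2 : (U : Matrix m m ℂ) * star (U : Matrix m m ℂ) = 1 :=
    Matrix.mem_unitaryGroup_iff.mp U.2
  simp [conjD, h2]

lemma conjD_add (U : Matrix.unitaryGroup m ℂ) (d e : m → ℝ) :
    conjD U d + conjD U e = conjD U (fun i => d i + e i) := by
  have h : (fun i => ((d i + e i : ℝ) : ℂ)) = fun i => ((d i : ℝ) : ℂ) + ((e i : ℝ) : ℂ) := by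
    funext i; push_cast; ring
  simp only [conjD, h, ← Matrix.diagonal_add, Matrix.mul_add, Matrix.add_mul]

lemma conjD_sub (U : Matrix.unitaryGroup m ℂ) (d e : m → ℝ) :
    conjD U d - conjD U e = conjD U (fun i => d i - e i) := by
  have h : (fun i => ((d i - e i : ℝ) : ℂ)) = fun i => ((d i : ℝ) : ℂ) - ((e i : ℝ) : ℂ) := by
    funext i; push_cast; ring
  simp only [conjD, h, ← Matrix.diagonal_sub, Matrix.mul_sub, Matrix.sub_mul]

lemma conjD_smul (U : Matrix.unitaryGroup m ℂ) (r : ℝ) (d : m → ℝ) :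
    r • conjD U d = conjD U (fun i => r * d i) := by
  have h : (fun i => ((r * d i : ℝ) : ℂ)) = r • fun i => ((d i : ℝ) : ℂ) := by
    funext i; push_cast [Pi.smul_apply]; simp [Complex.real_smul]
  simp only [conjD, h, Matrix.diagonal_smul, smul_mul_assoc, mul_smul_comm]

/-- Well-definedness of the functional calculus: two unitary diagonalizations of the
same matrix give the same value of `f` applied entrywise. -/
lemma conjD_congr {U V : Matrix.unitaryGroup m ℂ} {d e : m → ℝ}
    (h : conjD U d = conjD V e) (f : ℝ → ℝ) :
    conjD U (fun i => f (d i)) = conjD V (fun i => f (e i)) := by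
  set Um : Matrix m m ℂ := (U : Matrix m m ℂ)
  set Vm : Matrix m m ℂ := (V : Matrix m m ℂ)
  have hU1 : star Um * Um = 1 := Matrix.UnitaryGroup.star_mul_self U
  have hU2 : Um * star Um = 1 := Matrix.mem_unitaryGroup_iff.mp U.2
  have hV1 : star Vm * Vm = 1 := Matrix.UnitaryGroup.star_mul_self V
  have hV2 : Vm * star Vm = 1 := Matrix.mem_unitaryGroup_iff.mp V.2
  set K : Matrix m m ℂ := star Um * Vm with hK
  have key : ∀ i j, (d i : ℂ) * K i j = K i j * (e j : ℂ) := by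
    have h2 : Matrix.diagonal (fun i => ((d i : ℝ) : ℂ)) * K
        = K * Matrix.diagonal (fun i => ((e i : ℝ) : ℂ)) := by
      have h3 := congrArg (fun M => star Um * M * Vm) h
      simp only [conjD] at h3
      calc Matrix.diagonal (fun i => ((d i : ℝ) : ℂ)) * K
          = star Um * (Um * Matrix.diagonal (fun i => ((d i : ℝ) : ℂ)) * star Um) * Vm := by
            simp only [Matrix.mul_assoc, ← Matrix.mul_assoc (star Um) Um, hU1, Matrix.one_mul, hK]
        _ = star Um * (Vm * Matrix.diagonal (fun i => ((e i : ℝ) : ℂ)) * star Vm) * Vm := h3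
        _ = K * Matrix.diagonal (fun i => ((e i : ℝ) : ℂ)) := by
            simp only [Matrix.mul_assoc, hK]
            rw [hV1, Matrix.mul_one]
    intro i j
    have := congrFun (congrFun h2 i) j
    simpa [Matrix.diagonal_mul, Matrix.mul_diagonal] using this
  have key2 : Matrix.diagonal (fun i => ((f (d i) : ℝ) : ℂ)) * K
      = K * Matrix.diagonal (fun i => ((f (e i) : ℝ) : ℂ)) := by
    ext i j
    simp only [Matrix.diagonal_mul, Matrix.mul_diagonal]
    rcases eq_or_ne (K i j) 0 with hk | hk
    · simp [hk]
    · have hde : d i = e j := by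
        have h4 := key i j
        rw [mul_comm (K i j) _] at h4
        exact_mod_cast mul_right_cancel₀ hk h4
      rw [hde, mul_comm]
  set D' : Matrix m m ℂ := Matrix.diagonal (fun i => ((f (d i) : ℝ) : ℂ)) with hD'
  set E' : Matrix m m ℂ := Matrix.diagonal (fun i => ((f (e i) : ℝ) : ℂ)) with hE'
  have l1 : Um * (D' * K) * star Vm = conjD U (fun i => f (d i)) := by
    rw [hK, conjD,
      show Um * (D' * (star Um * Vm)) * star Vm = Um * D' * star Um * (Vm * star Vm) by
        simp only [Matrix.mul_assoc],
      hV2, Matrix.mul_one]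
  have l2 : Um * (K * E') * star Vm = conjD V (fun i => f (e i)) := by
    rw [hK, conjD,
      show Um * (star Um * Vm * E') * star Vm = Um * star Um * (Vm * E' * star Vm) by
        simp only [Matrix.mul_assoc],
      hU2, Matrix.one_mul]
  calc conjD U (fun i => f (d i)) = Um * (D' * K) * star Vm := l1.symm
    _ = Um * (K * E') * star Vm := by rw [key2]
    _ = conjD V (fun i => f (e i)) := l2


lemma star_kron (A : Matrix m m ℂ) (B : Matrix m' m' ℂ) :
    star (A ⊗ₖ B) = star A ⊗ₖ star B := by
  ext ⟨i, j⟩ ⟨k, l⟩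
  simp [Matrix.star_apply, Matrix.kroneckerMap_apply, star_mul']

noncomputable def kronU (U : Matrix.unitaryGroup m ℂ) (V : Matrix.unitaryGroup m' ℂ) :
    Matrix.unitaryGroup (m × m') ℂ :=
  ⟨(U : Matrix m m ℂ) ⊗ₖ (V : Matrix m' m' ℂ), by
    rw [Matrix.mem_unitaryGroup_iff, star_kron, ← Matrix.mul_kronecker_mul,
      Matrix.mem_unitaryGroup_iff.mp U.2, Matrix.mem_unitaryGroup_iff.mp V.2,
      Matrix.one_kronecker_one]⟩

lemma conjD_kron (U : Matrix.unitaryGroup m ℂ) (V : Matrix.unitaryGroup m' ℂ)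
    (d : m → ℝ) (e : m' → ℝ) :
    conjD U d ⊗ₖ conjD V e = conjD (kronU U V) (fun p => d p.1 * e p.2) := by
  simp only [conjD, kronU, Matrix.mul_kronecker_mul, Matrix.diagonal_kronecker_diagonal,
    star_kron]
  congr 2
  funext p
  push_cast
  rfl

lemma matFun_conjD (f : ℝ → ℝ) (U : Matrix.unitaryGroup m ℂ) (d : m → ℝ) :
    matFun f (conjD U d) = conjD U (fun i => f (d i)) := by
  have hH : (conjD U d).IsHermitian := conjD_isHermitian U d
  have hspec : conjD U d = conjD hH.eigenvectorUnitary hH.eigenvalues := by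
    simpa [conjD, Function.comp_def] using hH.spectral_theorem
  rw [matFun, dif_pos hH]
  exact (conjD_congr hspec f).symm

lemma posDef_conj {M N N' : Matrix m m ℂ} (hM : M.PosDef) (hN : N' * N = 1) :
    (Nᴴ * M * N).PosDef := by
  refine Matrix.PosDef.of_dotProduct_mulVec_pos (Matrix.isHermitian_conjTranspose_mul_mul N hM.1) fun x hx => ?_
  have hnx : N *ᵥ x ≠ 0 := by
    intro h0
    apply hx
    calc x = (N' * N) *ᵥ x := by rw [hN, Matrix.one_mulVec]
      _ = N' *ᵥ (N *ᵥ x) := by rw [Matrix.mulVec_mulVec]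
      _ = 0 := by rw [h0, Matrix.mulVec_zero]
  simpa only [Matrix.star_mulVec, dotProduct_mulVec, Matrix.vecMul_vecMul]
    using hM.dotProduct_mulVec_pos hnx

lemma conjD_posSemidef (U : Matrix.unitaryGroup m ℂ) {d : m → ℝ} (hd : ∀ i, 0 ≤ d i) :
    (conjD U d).PosSemidef := by
  rw [conjD, Matrix.star_eq_conjTranspose]
  refine Matrix.PosSemidef.mul_mul_conjTranspose_same ?_ _
  exact Matrix.PosSemidef.diagonal fun i => by simp only [Pi.zero_apply]; exact_mod_cast hd i

lemma kron_submatrix (X Y : Matrix m m ℂ) :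
    (X ⊗ₖ Y).submatrix (fun i : m => (i, i)) (fun i : m => (i, i)) = X.hadamard Y := by
  ext i j
  rfl

end Aux


theorem hadamard_geoMean_inequality {n : ℕ} (A B : Matrix (Fin n) (Fin n) ℂ)
    (hA : A.PosDef) (hB : B.PosDef) (α : ℝ) (hα : α ∈ Set.Icc (0 : ℝ) 1) :
    (A.hadamard B - (geoMean α A B).hadamard (geoMean (1 - α) A B)).PosSemidef := by
  obtain ⟨hα0, hα1⟩ := hα
  classical
  set U := hA.1.eigenvectorUnitary with hU
  set a := hA.1.eigenvalues with ha'
  have ha : ∀ i, 0 < a i := fun i => hA.eigenvalues_pos i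
  have hAe : A = conjD U a := by simpa [conjD, Function.comp_def] using hA.1.spectral_theorem
  have hmpowA : ∀ r : ℝ, mpow A r = conjD U (fun i => a i ^ r) := fun r => by
    rw [mpow, hAe, matFun_conjD]
  set R : Matrix (Fin n) (Fin n) ℂ := conjD U (fun i => a i ^ ((1:ℝ)/2)) with hRdef
  set Rinv : Matrix (Fin n) (Fin n) ℂ := conjD U (fun i => a i ^ (-((1:ℝ)/2))) with hRinvdef
  have hR : mpow A (1/2 : ℝ) = R := hmpowA _
  have hRinv : mpow A (-(1/2) : ℝ) = Rinv := hmpowA _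
  have hRR : R * Rinv = 1 := by
    rw [hRdef, hRinvdef, conjD_mul,
      show (fun i => a i ^ ((1:ℝ)/2) * a i ^ (-((1:ℝ)/2))) = fun _ => (1:ℝ) from
        funext fun i => by rw [← Real.rpow_add (ha i)]; norm_num,
      conjD_one]
  have hRinvR : Rinv * R = 1 := by
    rw [hRdef, hRinvdef, conjD_mul,
      show (fun i => a i ^ (-((1:ℝ)/2)) * a i ^ ((1:ℝ)/2)) = fun _ => (1:ℝ) from
        funext fun i => by rw [← Real.rpow_add (ha i)]; norm_num,
      conjD_one]
  have hA1 : A = R * 1 * R := by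
    rw [Matrix.mul_one, hRdef, conjD_mul, hAe]
    exact congrArg _ (funext fun i => by
      rw [← Real.rpow_add (ha i)]; norm_num)
  set Cm : Matrix (Fin n) (Fin n) ℂ := Rinv * B * Rinv with hCmdef
  have hRinvHerm : Rinv.IsHermitian := conjD_isHermitian U _
  have hCm : Cm.PosDef := by
    have h := posDef_conj (N := Rinv) (N' := R) hB hRR
    rwa [hRinvHerm.eq] at h
  set W := hCm.1.eigenvectorUnitary with hW
  set c := hCm.1.eigenvalues with hc'
  have hc : ∀ i, 0 < c i := fun i => hCm.eigenvalues_pos i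
  have hCe : Cm = conjD W c := by simpa [conjD, Function.comp_def] using hCm.1.spectral_theorem
  have hmpowC : ∀ t : ℝ, mpow Cm t = conjD W (fun i => c i ^ t) := fun t => by
    rw [mpow, hCe, matFun_conjD]
  have hgeo : ∀ t : ℝ, geoMean t A B = R * mpow Cm t * R := by
    intro t
    unfold geoMean powerMean
    rw [if_pos rfl, hR, hRinv, ← hCmdef]
  have hBe : B = R * Cm * R := by
    rw [hCmdef,
      show R * (Rinv * B * Rinv) * R = (R * Rinv) * B * (Rinv * R) from by
        simp only [Matrix.mul_assoc],
      hRR, hRinvR, Matrix.one_mul, Matrix.mul_one]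
  -- Kronecker level
  set M : Matrix (Fin n × Fin n) (Fin n × Fin n) ℂ := R ⊗ₖ R with hMdef
  have hRh : R.IsHermitian := conjD_isHermitian U _
  have hMH : Mᴴ = M := by
    rw [hMdef, ← Matrix.star_eq_conjTranspose, star_kron]
    simp only [Matrix.star_eq_conjTranspose, hRh.eq]
  set g : Fin n × Fin n → ℝ :=
    fun p => (1 - α) * c p.2 + α * c p.1 - c p.1 ^ α * c p.2 ^ (1 - α) with hgdef
  have hg : ∀ p, 0 ≤ g p := by
    intro p
    have h : c p.1 ^ α * c p.2 ^ (1 - α) ≤ α * c p.1 + (1 - α) * c p.2 :=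
      Real.geom_mean_le_arith_mean2_weighted hα0 (by linarith)
        (hc p.1).le (hc p.2).le (by ring)
    simp only [hgdef]
    linarith
  have hK1 : A ⊗ₖ B = M * ((1 : Matrix (Fin n) (Fin n) ℂ) ⊗ₖ Cm) * M := by
    conv_lhs => rw [hA1, hBe]
    rw [Matrix.mul_kronecker_mul, Matrix.mul_kronecker_mul, hMdef]
  have hK2 : B ⊗ₖ A = M * (Cm ⊗ₖ (1 : Matrix (Fin n) (Fin n) ℂ)) * M := by
    conv_lhs => rw [hBe, hA1]
    rw [Matrix.mul_kronecker_mul, Matrix.mul_kronecker_mul, hMdef]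
  have hK3 : geoMean α A B ⊗ₖ geoMean (1 - α) A B
      = M * (mpow Cm α ⊗ₖ mpow Cm (1 - α)) * M := by
    rw [hgeo α, hgeo (1 - α), Matrix.mul_kronecker_mul, Matrix.mul_kronecker_mul, hMdef]
  have h1C : (1 : Matrix (Fin n) (Fin n) ℂ) ⊗ₖ Cm = conjD (kronU W W) (fun p => c p.2) := by
    rw [show (1 : Matrix (Fin n) (Fin n) ℂ) = conjD W (fun _ => 1) from (conjD_one W).symm,
      hCe, conjD_kron]
    exact congrArg _ (funext fun p => one_mul _)
  have hC1 : Cm ⊗ₖ (1 : Matrix (Fin n) (Fin n) ℂ) = conjD (kronU W W) (fun p => c p.1) := by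
    rw [show (1 : Matrix (Fin n) (Fin n) ℂ) = conjD W (fun _ => 1) from (conjD_one W).symm,
      hCe, conjD_kron]
    exact congrArg _ (funext fun p => mul_one _)
  have hGMk : mpow Cm α ⊗ₖ mpow Cm (1 - α)
      = conjD (kronU W W) (fun p => c p.1 ^ α * c p.2 ^ (1 - α)) := by
    rw [hmpowC, hmpowC, conjD_kron]
  have dist : ∀ X Y Z : Matrix (Fin n × Fin n) (Fin n × Fin n) ℂ,
      (1 - α) • (M * X * M) + α • (M * Y * M) - M * Z * M
        = M * ((1 - α) • X + α • Y - Z) * M := by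
    intro X Y Z
    simp only [Matrix.mul_add, Matrix.add_mul, Matrix.mul_sub, Matrix.sub_mul,
      mul_smul_comm, smul_mul_assoc]
  have hDelta : (1 - α) • (A ⊗ₖ B) + α • (B ⊗ₖ A)
      - (geoMean α A B ⊗ₖ geoMean (1 - α) A B) = M * conjD (kronU W W) g * M := by
    rw [hK1, hK2, hK3, h1C, hC1, hGMk, dist, conjD_smul, conjD_smul, conjD_add, conjD_sub]
  have hPSD : ((1 - α) • (A ⊗ₖ B) + α • (B ⊗ₖ A)
      - (geoMean α A B ⊗ₖ geoMean (1 - α) A B)).PosSemidef := by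
    rw [hDelta]
    have h1 := (conjD_posSemidef (kronU W W) hg).mul_mul_conjTranspose_same M
    rwa [hMH] at h1
  have hsub := hPSD.submatrix (fun i : Fin n => (i, i))
  have heq : ((1 - α) • (A ⊗ₖ B) + α • (B ⊗ₖ A)
      - (geoMean α A B ⊗ₖ geoMean (1 - α) A B)).submatrix
        (fun i : Fin n => (i, i)) (fun i : Fin n => (i, i))
      = A.hadamard B - (geoMean α A B).hadamard (geoMean (1 - α) A B) := by
    simp only [Matrix.submatrix_add, Matrix.submatrix_sub, Matrix.submatrix_smul,
      Pi.add_apply, Pi.sub_apply, Pi.smul_apply, kron_submatrix]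
    rw [Matrix.hadamard_comm B A, ← add_smul]
    norm_num
  rwa [heq] at hsub
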